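/- Let ω be a finite binary word, ξ ∈ [0,1], and (α,β) := φ_ω(ξ,0), and suppose α or β is irrational. Then for every ε > 0, liminf over positive integers s of s^{4−ε} · (min over integers m of |α − m/s|) · (min over integers n of |β − n/s|) equals 0. -/

import Mathlib

open Filter

noncomputable def phi0 (p : ℝ × ℝ) : ℝ × ℝ := (1 / (1 + p.2), p.1 / (1 + p.2))
noncomputable def phi1 (p : ℝ × ℝ) : ℝ × ℝ := (p.1 / (1 + p.2), p.2 / (1 + p.2))

/-- The map corresponding to a letter: φ₀ for `false`, φ₁ for `true`. -/
noncomputable def phiOf : Bool → (ℝ × ℝ → ℝ × ℝ)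
  | false => phi0
  | true => phi1

/-- The composition φ_ω = φ_{ω₀} ∘ φ_{ω₁} ∘ ⋯ ∘ φ_{ω_{n-1}}. -/
noncomputable def phiWord : List Bool → (ℝ × ℝ → ℝ × ℝ)
  | [] => id
  | b :: t => phiOf b ∘ phiWord t

/-- Addition of integer row vectors. -/
def addR (a b : ℤ × ℤ × ℤ) : ℤ × ℤ × ℤ := (a.1 + b.1, a.2.1 + b.2.1, a.2.2 + b.2.2)

/-- The integer projective matrix (as three rows) representing `phiWord ω`. -/
def mats : List Bool → (ℤ × ℤ × ℤ) × (ℤ × ℤ × ℤ) × (ℤ × ℤ × ℤ)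
  | [] => ((1, 0, 0), (0, 1, 0), (0, 0, 1))
  | false :: t => ((mats t).2.2, (mats t).1, addR (mats t).2.1 (mats t).2.2)
  | true :: t => ((mats t).1, (mats t).2.1, addR (mats t).2.1 (mats t).2.2)

/-- Evaluation of a row on an affine point. -/
noncomputable def evR (r : ℤ × ℤ × ℤ) (x y : ℝ) : ℝ := r.1 * x + r.2.1 * y + r.2.2

lemma evR_addR (a b : ℤ × ℤ × ℤ) (x y : ℝ) :
    evR (addR a b) x y = evR a x y + evR b x y := by
  simp only [evR, addR]; push_cast; ring

lemma phiWord_tri (ω : List Bool) (x y : ℝ) (h1 : x ≤ 1) (h2 : y ≤ x) (h3 : 0 ≤ y) :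
    0 < evR (mats ω).2.2 x y ∧
    (phiWord ω (x, y)).1 = evR (mats ω).1 x y / evR (mats ω).2.2 x y ∧
    (phiWord ω (x, y)).2 = evR (mats ω).2.1 x y / evR (mats ω).2.2 x y ∧
    (phiWord ω (x, y)).1 ≤ 1 ∧ (phiWord ω (x, y)).2 ≤ (phiWord ω (x, y)).1 ∧
    0 ≤ (phiWord ω (x, y)).2 := by
  induction ω with
  | nil =>
    simp only [phiWord, mats, evR, id_eq]
    norm_num
    exact ⟨h1, h2, h3⟩
  | cons b t ih =>
    obtain ⟨hw, hu, hv, hq1, hq2, hq3⟩ := ih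
    set u := evR (mats t).1 x y with hudef
    set v := evR (mats t).2.1 x y with hvdef
    set w := evR (mats t).2.2 x y with hwdef
    have hwne : w ≠ 0 := ne_of_gt hw
    have hv0 : 0 ≤ v := by
      have hvv : v = (phiWord t (x, y)).2 * w := by rw [hv]; field_simp
      rw [hvv]; exact mul_nonneg hq3 hw.le
    have hu_le_w : u ≤ w := by
      have h := hq1; rw [hu] at h
      exact (div_le_one hw).mp h
    have hv_le_u : v ≤ u := by
      have h := hq2; rw [hu, hv] at h
      exact (div_le_div_iff_of_pos_right hw).mp h
    have hu0 : 0 ≤ u := le_trans hv0 hv_le_u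
    have hwv : 0 < w + v := by linarith
    have hwvne : w + v ≠ 0 := ne_of_gt hwv
    have hden : 1 + (phiWord t (x, y)).2 = (w + v) / w := by
      rw [hv]; field_simp
    cases b with
    | false =>
      have hEval : phiWord (false :: t) (x, y) = (w / (w + v), u / (w + v)) := by
        show phi0 (phiWord t (x, y)) = _
        have e1 : (phi0 (phiWord t (x, y))).1 = w / (w + v) := by
          simp only [phi0]; rw [hden, one_div_div]
        have e2 : (phi0 (phiWord t (x, y))).2 = u / (w + v) := by
          simp only [phi0]; rw [hden, hu]; field_simp
        exact Prod.ext e1 e2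
      have hm : mats (false :: t) =
          ((mats t).2.2, (mats t).1, addR (mats t).2.1 (mats t).2.2) := rfl
      rw [hEval, hm]
      simp only [evR_addR, ← hudef, ← hvdef, ← hwdef]
      refine ⟨hwv.trans_eq (add_comm w v), ?_, ?_, ?_, ?_, ?_⟩
      · rw [add_comm v w]
      · rw [add_comm v w]
      · exact (div_le_one hwv).mpr (by linarith)
      · exact (div_le_div_iff_of_pos_right hwv).mpr hu_le_w
      · exact div_nonneg hu0 hwv.le
    | true =>
      have hEval : phiWord (true :: t) (x, y) = (u / (w + v), v / (w + v)) := by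
        show phi1 (phiWord t (x, y)) = _
        have e1 : (phi1 (phiWord t (x, y))).1 = u / (w + v) := by
          simp only [phi1]; rw [hden, hu]; field_simp
        have e2 : (phi1 (phiWord t (x, y))).2 = v / (w + v) := by
          simp only [phi1]; rw [hden, hv]; field_simp
        exact Prod.ext e1 e2
      have hm : mats (true :: t) =
          ((mats t).1, (mats t).2.1, addR (mats t).2.1 (mats t).2.2) := rfl
      rw [hEval, hm]
      simp only [evR_addR, ← hudef, ← hvdef, ← hwdef]
      refine ⟨hwv.trans_eq (add_comm w v), ?_, ?_, ?_, ?_, ?_⟩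
      · rw [add_comm v w]
      · rw [add_comm v w]
      · exact (div_le_one hwv).mpr (by linarith)
      · exact (div_le_div_iff_of_pos_right hwv).mpr hv_le_u
      · exact div_nonneg hv0 hwv.le


lemma finite_bounded_rats (ξ : ℝ) (Q : ℕ) :
    {r : ℚ | r.den ≤ Q ∧ |ξ - (r : ℝ)| ≤ 1}.Finite := by
  set M : ℤ := ⌈(|ξ| + 1) * Q⌉ with hM
  have hsub : {r : ℚ | r.den ≤ Q ∧ |ξ - (r : ℝ)| ≤ 1} ⊆
      (fun p : ℤ × ℕ => (p.1 : ℚ) / (p.2 : ℚ)) '' (Set.Icc (-M) M ×ˢ Set.Iic Q) := by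
    rintro r ⟨hden, hcl⟩
    have hdenR : (0 : ℝ) < (r.den : ℝ) := by exact_mod_cast r.pos
    have habs : |(r : ℝ)| ≤ |ξ| + 1 := by
      have h := abs_sub_abs_le_abs_sub (r : ℝ) ξ
      rw [abs_sub_comm] at h
      linarith
    have hnum : (|r.num| : ℝ) ≤ (M : ℝ) := by
      have e : |(r : ℝ)| = (|r.num| : ℝ) / (r.den : ℝ) := by
        rw [Rat.cast_def, abs_div, abs_of_pos hdenR]

      have h1 : (|r.num| : ℝ) = |(r : ℝ)| * (r.den : ℝ) := by
        rw [e]; field_simp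
      have h2 : (|r.num| : ℝ) ≤ (|ξ| + 1) * (Q : ℝ) := by
        rw [h1]
        apply mul_le_mul habs (by exact_mod_cast hden) hdenR.le (by positivity)
      exact h2.trans (Int.le_ceil _)
    have hnum' : |r.num| ≤ M := by exact_mod_cast hnum
    refine ⟨(r.num, r.den), ⟨?_, hden⟩, ?_⟩
    · rw [Set.mem_Icc]; constructor <;> [linarith [neg_abs_le r.num]; linarith [le_abs_self r.num]]
    · simp [Rat.num_div_den]
  exact (((Set.finite_Icc _ _).prod (Set.finite_Iic _)).image _).subset hsub

set_option maxHeartbeats 1000000 in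
/-- Key quantitative step: for irrational `ξ` and an integer Möbius datum with positive
denominator at `ξ`, there are arbitrarily large denominators `s` giving simultaneously
good approximations. -/
lemma exists_good_s (A C D F G E : ℤ) (ξ : ℝ) (hc : 0 < (G : ℝ) * ξ + (E : ℝ))
    (hξirr : Irrational ξ) (ε δ : ℝ) (hε : 0 < ε) (hδ : 0 < δ) (N : ℕ) :
    ∃ s : ℕ, N ≤ s ∧
      (s : ℝ) ^ ((4 : ℝ) - ε) *
        (⨅ m : ℤ, |((A : ℝ) * ξ + (C : ℝ)) / ((G : ℝ) * ξ + (E : ℝ)) - (m : ℝ) / (s : ℝ)|) *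
        (⨅ n : ℤ, |((D : ℝ) * ξ + (F : ℝ)) / ((G : ℝ) * ξ + (E : ℝ)) - (n : ℝ) / (s : ℝ)|)
        ≤ δ := by
  have hS := Real.infinite_rat_abs_sub_lt_one_div_den_sq_of_irrational hξirr
  set c : ℝ := (G : ℝ) * ξ + (E : ℝ) with hcdef
  have hcne : c ≠ 0 := ne_of_gt hc
  set L : ℝ := |(G : ℝ)| * (|ξ| + 1) + |(E : ℝ)| + 1 with hLdef
  have hL0 : 0 ≤ |(G : ℝ)| * (|ξ| + 1) + |(E : ℝ)| := by positivity
  have hL1 : 1 ≤ L := by rw [hLdef]; linarith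
  have hcc : (0 : ℝ) < c * c := mul_pos hc hc
  set K₁ : ℝ := |(A : ℝ) * (E : ℝ) - (C : ℝ) * (G : ℝ)| * 2 / (c * c) with hK1
  set K₂ : ℝ := |(D : ℝ) * (E : ℝ) - (F : ℝ) * (G : ℝ)| * 2 / (c * c) with hK2
  have hK₁0 : 0 ≤ K₁ := by rw [hK1]; exact div_nonneg (by positivity) hcc.le
  have hK₂0 : 0 ≤ K₂ := by rw [hK2]; exact div_nonneg (by positivity) hcc.le
  set C₀ : ℝ := L ^ 4 * K₁ * K₂ * (c / 2) ^ (-ε) with hC0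
  have hdiff : ∀ X Z u v : ℝ, (G : ℝ) * u + E ≠ 0 → (G : ℝ) * v + E ≠ 0 →
      (X * u + Z) / ((G : ℝ) * u + E) - (X * v + Z) / ((G : ℝ) * v + E) =
        (X * (E : ℝ) - Z * (G : ℝ)) * (u - v) / (((G : ℝ) * u + E) * ((G : ℝ) * v + E)) := by
    intro X Z u v hu hv
    rw [div_sub_div _ _ hu hv]
    ring
  have ht1 : Tendsto (fun q : ℕ => C₀ * (q : ℝ) ^ (-ε)) atTop (nhds 0) := by
    have h := (tendsto_rpow_neg_atTop hε).comp (tendsto_natCast_atTop_atTop (R := ℝ))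
    have h2 := h.const_mul C₀
    simpa using h2
  have hev1 : ∀ᶠ q : ℕ in atTop, C₀ * (q : ℝ) ^ (-ε) < δ := ht1.eventually_lt_const hδ
  have hev2 : ∀ᶠ q : ℕ in atTop, 2 * (|(G : ℝ)| + 1) / c ≤ (q : ℝ) :=
    (tendsto_natCast_atTop_atTop (R := ℝ)).eventually_ge_atTop _
  have hev3 : ∀ᶠ q : ℕ in atTop, 2 * ((N : ℝ) + 1) / c ≤ (q : ℝ) :=
    (tendsto_natCast_atTop_atTop (R := ℝ)).eventually_ge_atTop _
  obtain ⟨Q, hQ⟩ := eventually_atTop.mp (hev1.and (hev2.and hev3))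
  obtain ⟨r, hrS, hrden⟩ : ∃ r : ℚ, |ξ - (r : ℝ)| < 1 / (r.den : ℝ) ^ 2 ∧ Q ≤ r.den := by
    by_contra hcon
    push_neg at hcon
    apply hS ((finite_bounded_rats ξ Q).subset ?_)
    intro r hr
    have hr' : |ξ - (r : ℝ)| < 1 / (r.den : ℝ) ^ 2 := hr
    have hd1 : (1 : ℝ) ≤ (r.den : ℝ) := by exact_mod_cast r.pos
    have h1 : (1 : ℝ) / (r.den : ℝ) ^ 2 ≤ 1 := by
      rw [div_le_one (by positivity)]
      exact one_le_pow₀ hd1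
    exact ⟨(hcon r hr').le, hr'.le.trans h1⟩
  obtain ⟨hq1, hq2, hq3⟩ := hQ r.den hrden
  set q : ℕ := r.den with hqdef
  set t : ℝ := (r : ℝ) with htdef
  have hqpos : (0 : ℝ) < (q : ℝ) := by
    rw [hqdef]; exact_mod_cast r.pos
  have hq1' : (1 : ℝ) ≤ (q : ℝ) := by
    rw [hqdef]; exact_mod_cast r.pos
  have htξ : |ξ - t| < 1 / (q : ℝ) ^ 2 := hrS
  have hqsq : (q : ℝ) ≤ (q : ℝ) ^ 2 := by
    calc (q : ℝ) = (q : ℝ) * 1 := (mul_one _).symm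
      _ ≤ (q : ℝ) * (q : ℝ) := mul_le_mul_of_nonneg_left hq1' hqpos.le
      _ = (q : ℝ) ^ 2 := (sq (q : ℝ)).symm
  have htb : |t| ≤ |ξ| + 1 := by
    have h := abs_sub_abs_le_abs_sub t ξ
    rw [abs_sub_comm] at h
    have h1 : 1 / (q : ℝ) ^ 2 ≤ 1 := by
      rw [div_le_one (by positivity)]
      exact one_le_pow₀ hq1'
    linarith
  rw [div_le_iff₀ hc] at hq2 hq3
  have hGbound : |(G : ℝ)| * |t - ξ| ≤ c / 2 := by
    have h1 : |t - ξ| ≤ 1 / (q : ℝ) := by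
      rw [abs_sub_comm]
      have h2 : 1 / (q : ℝ) ^ 2 ≤ 1 / (q : ℝ) := by
        rw [div_le_div_iff₀ (by positivity) hqpos]
        linarith
      linarith
    have h3 : |(G : ℝ)| * (1 / (q : ℝ)) ≤ c / 2 := by
      rw [mul_one_div, div_le_div_iff₀ hqpos two_pos]
      linarith [abs_nonneg (G : ℝ)]
    calc |(G : ℝ)| * |t - ξ| ≤ |(G : ℝ)| * (1 / (q : ℝ)) :=
          mul_le_mul_of_nonneg_left h1 (abs_nonneg _)
      _ ≤ c / 2 := h3
  set ct : ℝ := (G : ℝ) * t + (E : ℝ) with hctdef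
  have hct_eq : ct = c + (G : ℝ) * (t - ξ) := by rw [hctdef, hcdef]; ring
  have hct_lb : c / 2 ≤ ct := by
    have h1 := neg_abs_le ((G : ℝ) * (t - ξ))
    rw [abs_mul] at h1
    rw [hct_eq]; linarith
  have hct_pos : 0 < ct := lt_of_lt_of_le (half_pos hc) hct_lb
  have hct_ne : ct ≠ 0 := ne_of_gt hct_pos
  have hct_ub : ct ≤ L := by
    rw [hLdef, hctdef]
    have h1 : (G : ℝ) * t ≤ |(G : ℝ)| * |t| := by
      rw [← abs_mul]; exact le_abs_self _
    have h2 : |(G : ℝ)| * |t| ≤ |(G : ℝ)| * (|ξ| + 1) :=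
      mul_le_mul_of_nonneg_left htb (abs_nonneg _)
    have h3 : (E : ℝ) ≤ |(E : ℝ)| := le_abs_self _
    linarith
  set s' : ℤ := G * r.num + E * (q : ℤ) with hs'def
  have hs'R : (s' : ℝ) = (q : ℝ) * ct := by
    rw [hs'def, hctdef, htdef, Rat.cast_def, ← hqdef]
    push_cast
    field_simp
    try ring
  have hs'pos : (0 : ℝ) < (s' : ℝ) := by rw [hs'R]; exact mul_pos hqpos hct_pos
  have hs'nonneg : (0 : ℤ) ≤ s' := by exact_mod_cast hs'pos.le
  set s : ℕ := s'.toNat with hsdef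
  have hsR : (s : ℝ) = (s' : ℝ) := by
    rw [hsdef]
    exact_mod_cast congrArg (Int.cast (R := ℝ)) (Int.toNat_of_nonneg hs'nonneg)
  have hspos : (0 : ℝ) < (s : ℝ) := by rw [hsR]; exact hs'pos
  have hs_lb : (q : ℝ) * (c / 2) ≤ (s : ℝ) := by
    rw [hsR, hs'R]
    exact mul_le_mul_of_nonneg_left hct_lb hqpos.le
  have hs_ub : (s : ℝ) ≤ L * (q : ℝ) := by
    rw [hsR, hs'R, mul_comm L (q : ℝ)]
    exact mul_le_mul_of_nonneg_left hct_ub hqpos.le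
  have hcoord : ∀ X Z : ℤ,
      (⨅ m : ℤ, |((X : ℝ) * ξ + (Z : ℝ)) / c - (m : ℝ) / (s : ℝ)|) ≤
        |(X : ℝ) * (E : ℝ) - (Z : ℝ) * (G : ℝ)| * 2 / (c * c) / (q : ℝ) ^ 2 := by
    intro X Z
    have hbdd : BddBelow (Set.range fun m : ℤ =>
        |((X : ℝ) * ξ + (Z : ℝ)) / c - (m : ℝ) / (s : ℝ)|) := by
      refine ⟨0, ?_⟩; rintro x ⟨m, rfl⟩; positivity
    refine ciInf_le_of_le hbdd (X * r.num + Z * (q : ℤ)) ?_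
    have hctq : (0 : ℝ) < (q : ℝ) * ((G : ℝ) * ((r.num : ℝ) / (q : ℝ)) + (E : ℝ)) := by
      have h0 := hct_pos
      rw [hctdef, htdef, Rat.cast_def, ← hqdef] at h0
      exact mul_pos hqpos h0
    have hnum : ((X * r.num + Z * (q : ℤ) : ℤ) : ℝ) / (s : ℝ) =
        ((X : ℝ) * t + (Z : ℝ)) / ct := by
      rw [hsR, hs'R, hctdef, htdef, Rat.cast_def, ← hqdef]
      push_cast
      rw [div_eq_div_iff (ne_of_gt hctq) (ne_of_gt (by nlinarith [hctq, hqpos] : (0:ℝ) <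
        (G : ℝ) * ((r.num : ℝ) / (q : ℝ)) + (E : ℝ)))]
      field_simp
      try ring
    rw [hnum]
    have hd : ((X : ℝ) * ξ + (Z : ℝ)) / c - ((X : ℝ) * t + (Z : ℝ)) / ct =
        ((X : ℝ) * (E : ℝ) - (Z : ℝ) * (G : ℝ)) * (ξ - t) / (c * ct) := by
      rw [hcdef, hctdef]
      exact hdiff (X : ℝ) (Z : ℝ) ξ t hcne (by rw [hctdef] at hct_ne; exact hct_ne)
    rw [hd, abs_div, abs_mul]
    have hd1 : c * (c / 2) ≤ |c * ct| := by
      rw [abs_of_pos (mul_pos hc hct_pos)]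
      exact mul_le_mul_of_nonneg_left hct_lb hc.le
    calc |(X : ℝ) * (E : ℝ) - (Z : ℝ) * (G : ℝ)| * |ξ - t| / |c * ct|
        ≤ |(X : ℝ) * (E : ℝ) - (Z : ℝ) * (G : ℝ)| * (1 / (q : ℝ) ^ 2) / (c * (c / 2)) := by
          exact div_le_div₀ (by positivity)
            (mul_le_mul_of_nonneg_left htξ.le (abs_nonneg _)) (mul_pos hc (half_pos hc)) hd1
      _ = |(X : ℝ) * (E : ℝ) - (Z : ℝ) * (G : ℝ)| * 2 / (c * c) / (q : ℝ) ^ 2 := by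
          rw [mul_one_div, div_div, div_div, div_eq_div_iff
            (mul_pos (pow_pos hqpos 2) (mul_pos hc (half_pos hc))).ne'
            (mul_pos (mul_pos hc hc) (pow_pos hqpos 2)).ne']
          ring
  have hb1 : (⨅ m : ℤ, |((A : ℝ) * ξ + (C : ℝ)) / c - (m : ℝ) / (s : ℝ)|) ≤ K₁ / (q : ℝ) ^ 2 := by
    rw [hK1]; exact hcoord A C
  have hb2 : (⨅ n : ℤ, |((D : ℝ) * ξ + (F : ℝ)) / c - (n : ℝ) / (s : ℝ)|) ≤ K₂ / (q : ℝ) ^ 2 := by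
    rw [hK2]; exact hcoord D F
  have i1 : 0 ≤ ⨅ m : ℤ, |((A : ℝ) * ξ + (C : ℝ)) / c - (m : ℝ) / (s : ℝ)| :=
    Real.iInf_nonneg fun m => abs_nonneg _
  have i2 : 0 ≤ ⨅ n : ℤ, |((D : ℝ) * ξ + (F : ℝ)) / c - (n : ℝ) / (s : ℝ)| :=
    Real.iInf_nonneg fun n => abs_nonneg _
  refine ⟨s, ?_, ?_⟩
  · have h1 : (N : ℝ) ≤ (s : ℝ) := by
      have e2 : (q : ℝ) * (c / 2) = (q : ℝ) * c / 2 := by ring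
      rw [e2] at hs_lb
      clear_value s s' q t ct c K₁ K₂ L C₀
      linarith [hq3, hs_lb]
    exact_mod_cast h1
  · have h4 : (s : ℝ) ^ ((4 : ℝ) - ε) ≤ (L * (q : ℝ)) ^ 4 * ((q : ℝ) * (c / 2)) ^ (-ε) := by
      have e : (4 : ℝ) - ε = ((4 : ℕ) : ℝ) + (-ε) := by push_cast; ring
      rw [e, Real.rpow_add hspos, Real.rpow_natCast]
      have hqc2 : (0 : ℝ) < (q : ℝ) * (c / 2) := mul_pos hqpos (half_pos hc)
      exact mul_le_mul (pow_le_pow_left₀ hspos.le hs_ub 4)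
        (Real.rpow_le_rpow_of_nonpos hqc2 hs_lb (neg_nonpos.mpr hε.le))
        (Real.rpow_nonneg hspos.le _) (by positivity)
    have hrw : (L * (q : ℝ)) ^ 4 * ((q : ℝ) * (c / 2)) ^ (-ε) * (K₁ / (q : ℝ) ^ 2) *
        (K₂ / (q : ℝ) ^ 2) = C₀ * (q : ℝ) ^ (-ε) := by
      rw [Real.mul_rpow hqpos.le (half_pos hc).le, hC0]
      field_simp
    have hfs : (s : ℝ) ^ ((4 : ℝ) - ε) *
        (⨅ m : ℤ, |((A : ℝ) * ξ + (C : ℝ)) / c - (m : ℝ) / (s : ℝ)|) *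
        (⨅ n : ℤ, |((D : ℝ) * ξ + (F : ℝ)) / c - (n : ℝ) / (s : ℝ)|) ≤ C₀ * (q : ℝ) ^ (-ε) := by
      rw [← hrw]
      have hK₁q : 0 ≤ K₁ / (q : ℝ) ^ 2 := div_nonneg hK₁0 (by positivity)
      have hK₂q : 0 ≤ K₂ / (q : ℝ) ^ 2 := div_nonneg hK₂0 (by positivity)
      have hmid : (0 : ℝ) ≤ (L * (q : ℝ)) ^ 4 * ((q : ℝ) * (c / 2)) ^ (-ε) * (K₁ / (q : ℝ) ^ 2) :=
        mul_nonneg (mul_nonneg (by positivity)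
          (Real.rpow_nonneg (mul_pos hqpos (half_pos hc)).le _)) hK₁q
      exact mul_le_mul (mul_le_mul h4 hb1 i1
        (mul_nonneg (by positivity) (Real.rpow_nonneg (mul_pos hqpos (half_pos hc)).le _)))
        hb2 i2 hmid
    exact hfs.trans hq1.le

set_option maxHeartbeats 1000000 in
/-- if (α,β) = φ_ω(ξ,0) with ξ ∈ [0,1] and α or β irrational, then for
every ε > 0, liminf over positive integers s of
s^{4-ε} · (inf over m ∈ ℤ of |α - m/s|) · (inf over n ∈ ℤ of |β - n/s|) is 0. -/
theorem liminf_simultaneous_approx (ω : List Bool) (ξ : ℝ) (hξ : ξ ∈ Set.Icc (0 : ℝ) 1)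
    (hirr : Irrational (phiWord ω (ξ, 0)).1 ∨ Irrational (phiWord ω (ξ, 0)).2) :
    ∀ ε > (0 : ℝ),
      liminf (fun s : ℕ =>
        (s : ℝ) ^ ((4 : ℝ) - ε) *
          (⨅ m : ℤ, |(phiWord ω (ξ, 0)).1 - (m : ℝ) / (s : ℝ)|) *
          (⨅ n : ℤ, |(phiWord ω (ξ, 0)).2 - (n : ℝ) / (s : ℝ)|)) atTop = 0 := by
  intro ε hε
  obtain ⟨hx0, hx1⟩ := hξ
  obtain ⟨hcpos, hαeq, hβeq, hα1, hβα, hβ0⟩ := phiWord_tri ω ξ 0 hx1 hx0 le_rfl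
  set α := (phiWord ω (ξ, 0)).1 with hαdef
  set β := (phiWord ω (ξ, 0)).2 with hβdef
  set A : ℤ := (mats ω).1.1 with hA
  set C : ℤ := (mats ω).1.2.2 with hC
  set D : ℤ := (mats ω).2.1.1 with hD
  set F : ℤ := (mats ω).2.1.2.2 with hF
  set G : ℤ := (mats ω).2.2.1 with hG
  set E : ℤ := (mats ω).2.2.2.2 with hE
  have hev : ∀ r : ℤ × ℤ × ℤ, evR r ξ 0 = (r.1 : ℝ) * ξ + (r.2.2 : ℝ) := by
    intro r; simp [evR]
  have hc : 0 < (G : ℝ) * ξ + (E : ℝ) := by rw [hev] at hcpos; exact hcpos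
  have hα : α = ((A : ℝ) * ξ + (C : ℝ)) / ((G : ℝ) * ξ + (E : ℝ)) := by
    rw [hαeq, hev, hev]
  have hβ : β = ((D : ℝ) * ξ + (F : ℝ)) / ((G : ℝ) * ξ + (E : ℝ)) := by
    rw [hβeq, hev, hev]
  have hξirr : Irrational ξ := by
    by_contra hrat
    obtain ⟨p, hp⟩ : ξ ∈ Set.range ((↑) : ℚ → ℝ) := not_not.mp hrat
    rcases hirr with h | h
    · have he : α = (((A * p + C) / (G * p + E) : ℚ) : ℝ) := by
        rw [hα, ← hp]; push_cast; ring
      rw [he] at h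
      exact Rat.not_irrational _ h
    · have he : β = (((D * p + F) / (G * p + E) : ℚ) : ℝ) := by
        rw [hβ, ← hp]; push_cast; ring
      rw [he] at h
      exact Rat.not_irrational _ h
  set f : ℕ → ℝ := fun s : ℕ =>
      (s : ℝ) ^ ((4 : ℝ) - ε) * (⨅ m : ℤ, |α - (m : ℝ) / (s : ℝ)|) *
        (⨅ n : ℤ, |β - (n : ℝ) / (s : ℝ)|) with hfdef
  have hf0 : ∀ s : ℕ, 0 ≤ f s := by
    intro s
    rw [hfdef]
    exact mul_nonneg
      (mul_nonneg (Real.rpow_nonneg (Nat.cast_nonneg s) _)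
        (Real.iInf_nonneg fun m => abs_nonneg _))
      (Real.iInf_nonneg fun n => abs_nonneg _)
  have key : ∀ δ : ℝ, 0 < δ → ∀ N : ℕ, ∃ s : ℕ, N ≤ s ∧ f s ≤ δ := by
    intro δ hδ N
    obtain ⟨s, hs1, hs2⟩ := exists_good_s A C D F G E ξ hc hξirr ε δ hε hδ N
    refine ⟨s, hs1, ?_⟩
    rw [hfdef]
    simpa only [← hα, ← hβ] using hs2
  have hbdd : IsBoundedUnder (· ≥ ·) (atTop : Filter ℕ) f :=
    isBoundedUnder_of ⟨0, fun s => hf0 s⟩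
  have hfreq : ∀ δ : ℝ, 0 < δ → ∃ᶠ s in (atTop : Filter ℕ), f s ≤ δ := by
    intro δ hδ
    rw [frequently_atTop]
    intro N
    obtain ⟨s, hs1, hs2⟩ := key δ hδ N
    exact ⟨s, hs1, hs2⟩
  apply le_antisymm
  · refine le_of_forall_pos_le_add fun δ hδ => ?_
    rw [zero_add]
    exact liminf_le_of_frequently_le (hfreq δ hδ) hbdd
  · exact le_liminf_of_le (IsCoboundedUnder.of_frequently_le (hfreq 1 one_pos))
      (Eventually.of_forall hf0)
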